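/- Let n ≥ 2 and c(t) = ((n-1)t + 2-n)/(t(t^n - (n-1)t - 2 + n)) for t > 1. Then 2^n(1 + t·c(t))^{-1} · ∏_{i=1}^n x_i = δ(t) · (∏_{i=1}^n x_i) · (t-1), where δ(t) = 2^n t^{-n} (∑_{i=1}^{n-1} t^i - (n-2)), t = ∑ x_i, and x_i > 0; i.e., det G^{-1} factors as δ(x)·∏_{i=1}^{n+1} l_i(x) with l_i(x) = x_i for i ≤ n and l_{n+1}(x) = t - 1. -/

import Mathlib

theorem abreu_boundary_condition_factorization (n : ℕ) (hn : 2 ≤ n)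
    (x : Fin n → ℝ) (hx : ∀ i, 0 < x i)
    (t : ℝ) (ht : t = ∑ i, x i) (ht1 : 1 < t)
    (c : ℝ → ℝ)
    (hc : c = fun u => (((n : ℝ) - 1) * u + 2 - (n : ℝ)) /
      (u * (u ^ n - ((n : ℝ) - 1) * u - 2 + (n : ℝ))))
    (δ : ℝ → ℝ)
    (hδ : δ = fun u => 2 ^ n / u ^ n * (∑ i ∈ Finset.Icc 1 (n - 1), u ^ i - ((n : ℝ) - 2))) :
    2 ^ n * (1 + t * c t)⁻¹ * ∏ i, x i = δ t * (∏ i, x i) * (t - 1) := by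
  have htpos : 0 < t := lt_trans one_pos ht1
  have htne : t ≠ 0 := ne_of_gt htpos
  set S : ℝ := ∑ i ∈ Finset.Icc 1 (n - 1), t ^ i with hS
  have hIcc : Finset.Icc 1 (n - 1) = Finset.Ico 1 n := by
    rw [← Finset.Ico_add_one_right_eq_Icc]; congr 1; omega
  have hsum : S + 1 = ∑ i ∈ Finset.range n, t ^ i := by
    rw [hS, hIcc, Finset.range_eq_Ico,
      Finset.sum_eq_sum_Ico_succ_bot (by omega : 0 < n)]
    simp [add_comm]
  have hgeom : (S + 1) * (t - 1) = t ^ n - 1 := by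
    rw [hsum]; exact geom_sum_mul t n
  have hfac : t ^ n - ((n : ℝ) - 1) * t - 2 + n = (S - ((n : ℝ) - 2)) * (t - 1) := by
    linear_combination -hgeom
  have hSpos : 0 < S - ((n : ℝ) - 2) := by
    have h1 : ∀ i ∈ Finset.Icc 1 (n - 1), (1 : ℝ) ≤ t ^ i := fun i _ =>
      one_le_pow₀ (le_of_lt ht1)
    have h3 := Finset.card_nsmul_le_sum (Finset.Icc 1 (n - 1)) (fun i => t ^ i) 1 h1
    simp only [Nat.card_Icc, nsmul_eq_mul, mul_one] at h3
    have h4 : ((n - 1 + 1 - 1 : ℕ) : ℝ) = (n : ℝ) - 1 := by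
      have h5 : n - 1 + 1 - 1 = n - 1 := by omega
      rw [h5, Nat.cast_sub (by omega : 1 ≤ n)]; norm_num
    rw [← hS, h4] at h3
    linarith
  have hDne : t ^ n - ((n : ℝ) - 1) * t - 2 + n ≠ 0 := by
    rw [hfac]
    exact ne_of_gt (mul_pos hSpos (by linarith))
  have h1tc : 1 + t * c t = t ^ n / (t ^ n - ((n : ℝ) - 1) * t - 2 + n) := by
    rw [hc]
    dsimp only
    rw [← mul_div_assoc, mul_div_mul_left _ _ htne, one_add_div hDne]
    congr 1; ring
  rw [h1tc, hδ]
  simp only [← hS]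
  have htn : t ^ n ≠ 0 := pow_ne_zero _ htne
  field_simp
  linear_combination (∏ i, x i) * hfac
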